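/- Let G be a graph with two non-adjacent vertices x and y. Then χ(G) = min(χ(G'_{xy}), χ(G''_{xy})), where G'_{xy} is obtained from G by adding the edge {x,y}, and G''_{xy} is obtained from G by identifying x and y into a single new vertex (merging their neighborhoods, without creating parallel edges). -/

import Mathlib

open SimpleGraph

/-- Zykov identification of non-adjacent vertices x and y: the vertex y is removed and
its adjacencies are transferred to x (no parallel edges can arise). -/
def identify {V : Type*} (G : SimpleGraph V) (x y : V) : SimpleGraph {v : V // v ≠ y} where
  Adj a b := a ≠ b ∧ (G.Adj a b ∨ ((a : V) = x ∧ G.Adj y b) ∨ ((b : V) = x ∧ G.Adj (a : V) y))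
  symm := by
    constructor
    rintro a b ⟨hne, h⟩
    refine ⟨hne.symm, ?_⟩
    rcases h with h | ⟨ha, hb⟩ | ⟨hb, ha⟩
    · exact Or.inl h.symm
    · exact Or.inr (Or.inr ⟨ha, hb.symm⟩)
    · exact Or.inr (Or.inl ⟨hb, ha.symm⟩)
  loopless := by constructor; rintro a ⟨hne, -⟩; exact hne rfl

/-- From a coloring of the identification, get a coloring of G. -/
lemma colorable_of_identify {V : Type*} (G : SimpleGraph V) (x y : V) (hxy : x ≠ y)
    (hna : ¬ G.Adj x y) {n : ℕ} (h : (identify G x y).Colorable n) : G.Colorable n := by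
  classical
  obtain ⟨c⟩ := h
  refine ⟨Coloring.mk (fun v => if hv : v = y then c ⟨x, hxy⟩ else c ⟨v, hv⟩) ?_⟩
  intro a b hab
  have hab' := G.ne_of_adj hab
  by_cases ha : a = y <;> by_cases hb : b = y
  · exact absurd (ha.trans hb.symm) hab'
  · subst ha
    rw [dif_pos rfl, dif_neg hb]
    have hbx : b ≠ x := by intro hbx; subst hbx; exact hna hab.symm
    refine c.valid ⟨?_, Or.inr (Or.inl ⟨rfl, hab⟩)⟩
    intro h
    exact hbx (congrArg Subtype.val h).symm
  · subst hb
    rw [dif_neg ha, dif_pos rfl]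
    have hax : a ≠ x := by intro hax; subst hax; exact hna hab
    refine c.valid ⟨?_, Or.inr (Or.inr ⟨rfl, hab⟩)⟩
    intro h
    exact hax (congrArg Subtype.val h)
  · rw [dif_neg ha, dif_neg hb]
    refine c.valid ⟨?_, Or.inl hab⟩
    intro h
    exact hab' (congrArg Subtype.val h)

/-- Zykov: χ(G) = min(χ(G + xy), χ(G / {x=y})) for non-adjacent x, y. -/
theorem stmt_2 {V : Type*} [Fintype V] (G : SimpleGraph V) (x y : V) (hxy : x ≠ y)
    (hna : ¬ G.Adj x y) :
    G.chromaticNumber =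
      min ((G ⊔ SimpleGraph.fromEdgeSet {s(x, y)}).chromaticNumber)
        ((identify G x y).chromaticNumber) := by
  refine le_antisymm (le_min (chromaticNumber_le_of_forall_imp fun n => Colorable.mono_left le_sup_left) ?_) ?_
  · exact chromaticNumber_le_of_forall_imp fun n => colorable_of_identify G x y hxy hna
  · rw [chromaticNumber_eq_biInf]
    refine le_iInf₂ fun n hn => ?_
    obtain ⟨C⟩ := hn
    by_cases hcxy : C x = C y
    · refine le_trans (min_le_right _ _) ?_
      refine Colorable.chromaticNumber_le ⟨Coloring.mk (fun a => C a) ?_⟩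
      rintro a b ⟨hne, hadj | ⟨ha, hyb⟩ | ⟨hb, hay⟩⟩
      · exact C.valid hadj
      · show C a ≠ C b
        rw [ha, hcxy]; exact C.valid hyb
      · show C a ≠ C b
        rw [hb, hcxy]; exact (C.valid hay).symm.symm
    · refine le_trans (min_le_left _ _) ?_
      refine Colorable.chromaticNumber_le ⟨Coloring.mk C ?_⟩
      intro a b hab
      rcases hab with hab | hab
      · exact C.valid hab
      · rw [fromEdgeSet_adj] at hab
        obtain ⟨he, -⟩ := hab
        simp only [Set.mem_singleton_iff, Sym2.eq, Sym2.rel_iff', Prod.mk.injEq,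
          Prod.swap_prod_mk] at he
        rcases he with ⟨rfl, rfl⟩ | ⟨rfl, rfl⟩
        · exact hcxy
        · exact Ne.symm hcxy
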